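/- Let (Ω, ρ) be a compact metric space with a Borel probability measure P containing the set ℕ of non-negative integers as a dense subset, and for S ⊆ ℕ set π*(S) = P(cl(S)), Y = {A ⊆ ℕ : π*(A) + π*(ℕ \ A) = 1}, and π = π*|_Y. Let ω : Ω → [0,1] be a continuous function such that ∫_Ω f(ω(t)) dP(t) = ∫₀¹ f(t) dt for every continuous real-valued function f on [0,1]. If the sequence {n}_{n∈ℕ} (the identity sequence of non-negative integers) is uniformly distributed in Ω, then the sequence {ω(n)}_{n∈ℕ} is π-uniformly measurable. -/

import Mathlib

open MeasureTheory Filter Topology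

open scoped Classical

/-- A sequence `a : ℕ → Ω` is uniformly distributed in `Ω` with respect to the Borel
probability measure `P` if the averages of `g` along the sequence converge to `∫ g dP`
for every continuous real-valued `g` on `Ω`. -/
def UniformlyDistributed {Ω : Type*} [MetricSpace Ω] [MeasurableSpace Ω]
    (P : Measure Ω) (a : ℕ → Ω) : Prop :=
  ∀ g : C(Ω, ℝ),
    Tendsto (fun N : ℕ => (∑ n ∈ Finset.range N, g (a n)) / N) atTop (𝓝 (∫ x, g x ∂P))

/-- A mapping `x : M → [0,1]` is `π`-uniformly measurable if for each subinterval
`I ⊆ [0,1]` the preimage `x⁻¹(I)` belongs to `Y` and `π (x⁻¹(I)) = |I|`. -/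
def UnifMeasurable {α : Type*} (Y : Set (Set α)) (π : Set α → ℝ) (x : α → ℝ) : Prop :=
  ∀ a b : ℝ, 0 ≤ a → a ≤ b → b ≤ 1 →
    ∀ I : Set ℝ, (I = Set.Icc a b ∨ I = Set.Ico a b ∨ I = Set.Ioc a b ∨ I = Set.Ioo a b) →
      x ⁻¹' I ∈ Y ∧ π (x ⁻¹' I) = b - a

-- Key lemma: pushforward upper bound on closed intervals
theorem key_bound {Ω : Type*} [MetricSpace Ω] [CompactSpace Ω]
    [MeasurableSpace Ω] [BorelSpace Ω] (P : Measure Ω) [IsProbabilityMeasure P]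
    (ω : Ω → ℝ) (hω : Continuous ω)
    (hint : ∀ f : ℝ → ℝ, ContinuousOn f (Set.Icc (0 : ℝ) 1) →
      ∫ t, f (ω t) ∂P = ∫ t in (0 : ℝ)..1, f t)
    {c d : ℝ} (hcd : c ≤ d) :
    (P (ω ⁻¹' Set.Icc c d)).toReal ≤ d - c := by
  refine le_of_forall_pos_le_add (fun ε hε => ?_)
  set δ : ℝ := ε / 2 with hδdef
  have hδ : 0 < δ := by positivity
  set S : Set ℝ := Set.Icc c d with hS
  set f : ℝ → ℝ := fun t => max (1 - Metric.infDist t S / δ) 0 with hf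
  have hfc : Continuous f := by
    exact (continuous_const.sub ((Metric.continuous_infDist_pt S).div_const δ)).max
      continuous_const
  have hf0 : ∀ t, 0 ≤ f t := fun t => le_max_right _ _
  have hf1 : ∀ t, f t ≤ 1 := by
    intro t
    apply max_le _ zero_le_one
    have := Metric.infDist_nonneg (s := S) (x := t)
    have : 0 ≤ Metric.infDist t S / δ := by positivity
    linarith
  have hfS : ∀ t ∈ S, f t = 1 := by
    intro t ht
    simp [hf, Metric.infDist_zero_of_mem ht]
  have hfK : ∀ t, t ∉ Set.Icc (c - δ) (d + δ) → f t = 0 := by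
    intro t ht
    have hdist : δ ≤ Metric.infDist t S := by
      by_contra h
      push_neg at h
      obtain ⟨y, hy, hdy⟩ := (Metric.infDist_lt_iff ⟨c, Set.mem_Icc.2 ⟨le_refl c, hcd⟩⟩).1 h
      rw [Real.dist_eq] at hdy
      have := abs_lt.1 hdy
      exact ht ⟨by linarith [hy.1], by linarith [hy.2]⟩
    have : (1 : ℝ) - Metric.infDist t S / δ ≤ 0 := by
      have : 1 ≤ Metric.infDist t S / δ := (one_le_div hδ).2 hdist
      linarith
    simp [hf, max_eq_right this]
  -- integrals
  have hmeas : MeasurableSet (ω ⁻¹' S) := (isClosed_Icc.preimage hω).measurableSet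
  have h1 : (P (ω ⁻¹' S)).toReal = ∫ t, (ω ⁻¹' S).indicator (fun _ => (1:ℝ)) t ∂P := by
    rw [MeasureTheory.integral_indicator_const (1:ℝ) hmeas]; simp; rfl
  have hcomp : Continuous fun t => f (ω t) := hfc.comp hω
  have hint1 : Integrable (fun t => f (ω t)) P :=
    hcomp.integrable_of_hasCompactSupport (HasCompactSupport.of_compactSpace _)
  have h2 : ∫ t, (ω ⁻¹' S).indicator (fun _ => (1:ℝ)) t ∂P ≤ ∫ t, f (ω t) ∂P := by
    apply integral_mono ((integrable_const (1:ℝ)).indicator hmeas) hint1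
    intro t
    by_cases h : t ∈ ω ⁻¹' S
    · simp [Set.indicator_of_mem h, hfS _ h]
    · simp [Set.indicator_of_notMem h, hf0]
  have h3 : ∫ t, f (ω t) ∂P = ∫ t in (0:ℝ)..1, f t := hint f hfc.continuousOn
  -- bound the interval integral
  set K : Set ℝ := Set.Icc (c - δ) (d + δ) with hK
  have h4 : ∫ t in (0:ℝ)..1, f t ≤ d - c + 2 * δ := by
    rw [intervalIntegral.integral_of_le zero_le_one]
    have hKm : MeasurableSet K := measurableSet_Icc
    have step1 : ∫ t in Set.Ioc (0:ℝ) 1, f t ≤ ∫ t in Set.Ioc (0:ℝ) 1, K.indicator (fun _ => (1:ℝ)) t := by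
      apply setIntegral_mono (hfc.integrableOn_Ioc) ((integrableOn_const (by exact measure_Ioc_lt_top.ne)).indicator hKm)
      intro t
      by_cases h : t ∈ K
      · simpa [Set.indicator_of_mem h] using hf1 t
      · simp [Set.indicator_of_notMem h, hfK t h]
    have step2 : ∫ t in Set.Ioc (0:ℝ) 1, K.indicator (fun _ => (1:ℝ)) t
        = (volume (Set.Ioc (0:ℝ) 1 ∩ K)).toReal := by
      rw [setIntegral_indicator hKm]
      simp [Measure.restrict_apply]; rfl
    have step3 : (volume (Set.Ioc (0:ℝ) 1 ∩ K)).toReal ≤ d - c + 2 * δ := by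
      have hle : volume (Set.Ioc (0:ℝ) 1 ∩ K) ≤ volume K := measure_mono Set.inter_subset_right
      have hKvol : volume K = ENNReal.ofReal (d + δ - (c - δ)) := Real.volume_Icc
      have := ENNReal.toReal_mono (by rw [hKvol]; exact ENNReal.ofReal_ne_top) hle
      rw [hKvol, ENNReal.toReal_ofReal (by linarith)] at this
      linarith
    linarith
  have : d - c + 2 * δ = d - c + ε := by rw [hδdef]; ring
  linarith

theorem omega_image_unifMeasurable {Ω : Type*} [MetricSpace Ω] [CompactSpace Ω]
    [MeasurableSpace Ω] [BorelSpace Ω] (P : Measure Ω) [IsProbabilityMeasure P]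
    (ι : ℕ → Ω) (hι : Function.Injective ι) (hdense : DenseRange ι)
    (πs : Set ℕ → ℝ) (hπs : ∀ S : Set ℕ, πs S = (P (closure (ι '' S))).toReal)
    (Y : Set (Set ℕ)) (hY : Y = {A : Set ℕ | πs A + πs (Set.univ \ A) = 1})
    (ω : Ω → ℝ) (hω : Continuous ω) (hω01 : ∀ t : Ω, ω t ∈ Set.Icc (0 : ℝ) 1)
    (hint : ∀ f : ℝ → ℝ, ContinuousOn f (Set.Icc (0 : ℝ) 1) →
      ∫ t, f (ω t) ∂P = ∫ t in (0 : ℝ)..1, f t)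
    (hUD : UniformlyDistributed P ι) :
    UnifMeasurable Y πs (fun n => ω (ι n)) := by
  intro a b ha hab hb1 I hI
  set S : Set ℕ := (fun n => ω (ι n)) ⁻¹' I with hSdef
  -- subintervals
  have hIsub : I ⊆ Set.Icc a b := by
    rcases hI with h | h | h | h <;> subst h
    · exact subset_rfl
    · exact Set.Ico_subset_Icc_self
    · exact Set.Ioc_subset_Icc_self
    · exact Set.Ioo_subset_Icc_self
  have hIoo : Set.Ioo a b ⊆ I := by
    rcases hI with h | h | h | h <;> subst h
    · exact Set.Ioo_subset_Icc_self
    · exact Set.Ioo_subset_Ico_self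
    · exact Set.Ioo_subset_Ioc_self
    · exact subset_rfl
  have hnotI : ∀ x : ℝ, x ∉ I → x ≤ a ∨ b ≤ x := by
    intro x hx
    by_contra h
    push_neg at h
    exact hx (hIoo ⟨h.1, h.2⟩)
  -- upper bound for S
  have hsub1 : ι '' S ⊆ ω ⁻¹' Set.Icc a b := by
    rintro _ ⟨n, hn, rfl⟩
    exact hIsub hn
  have hC1 : closure (ι '' S) ⊆ ω ⁻¹' Set.Icc a b :=
    closure_minimal hsub1 (isClosed_Icc.preimage hω)
  have key1 : πs S ≤ b - a := by
    rw [hπs]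
    calc (P (closure (ι '' S))).toReal
        ≤ (P (ω ⁻¹' Set.Icc a b)).toReal :=
          ENNReal.toReal_mono (measure_ne_top P _) (measure_mono hC1)
      _ ≤ b - a := key_bound P ω hω hint hab
  -- upper bound for the complement
  have hsub2 : ι '' (Set.univ \ S) ⊆ ω ⁻¹' (Set.Icc 0 a ∪ Set.Icc b 1) := by
    rintro _ ⟨n, hn, rfl⟩
    have hx01 := hω01 (ι n)
    rcases hnotI _ hn.2 with h | h
    · exact Or.inl ⟨hx01.1, h⟩
    · exact Or.inr ⟨h, hx01.2⟩
  have hC2 : closure (ι '' (Set.univ \ S)) ⊆ ω ⁻¹' (Set.Icc 0 a ∪ Set.Icc b 1) :=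
    closure_minimal hsub2 ((isClosed_Icc.union isClosed_Icc).preimage hω)
  have key2 : πs (Set.univ \ S) ≤ a + (1 - b) := by
    rw [hπs]
    have h1 : (P (closure (ι '' (Set.univ \ S)))).toReal
        ≤ (P (ω ⁻¹' (Set.Icc 0 a ∪ Set.Icc b 1))).toReal :=
      ENNReal.toReal_mono (measure_ne_top P _) (measure_mono hC2)
    have h2 : (P (ω ⁻¹' (Set.Icc 0 a ∪ Set.Icc b 1))).toReal
        ≤ (P (ω ⁻¹' Set.Icc 0 a)).toReal + (P (ω ⁻¹' Set.Icc b 1)).toReal := by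
      rw [Set.preimage_union]
      calc (P (ω ⁻¹' Set.Icc 0 a ∪ ω ⁻¹' Set.Icc b 1)).toReal
          ≤ (P (ω ⁻¹' Set.Icc 0 a) + P (ω ⁻¹' Set.Icc b 1)).toReal :=
            ENNReal.toReal_mono
              (ENNReal.add_ne_top.2 ⟨measure_ne_top P _, measure_ne_top P _⟩)
              (measure_union_le _ _)
        _ = (P (ω ⁻¹' Set.Icc 0 a)).toReal + (P (ω ⁻¹' Set.Icc b 1)).toReal :=
            ENNReal.toReal_add (measure_ne_top P _) (measure_ne_top P _)
    have h3 : (P (ω ⁻¹' Set.Icc 0 a)).toReal ≤ a - 0 := key_bound P ω hω hint ha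
    have h4 : (P (ω ⁻¹' Set.Icc b 1)).toReal ≤ 1 - b := key_bound P ω hω hint hb1
    linarith
  -- lower bound for the sum
  have hunion : closure (ι '' S) ∪ closure (ι '' (Set.univ \ S)) = Set.univ := by
    rw [← closure_union, ← Set.image_union, Set.union_diff_cancel (Set.subset_univ S),
      Set.image_univ]
    exact hdense.closure_range
  have key3 : 1 ≤ πs S + πs (Set.univ \ S) := by
    rw [hπs, hπs]
    have h1 : (P (Set.univ : Set Ω)).toReal = 1 := by simp
    have h2 : (P (Set.univ : Set Ω)).toReal
        ≤ (P (closure (ι '' S))).toReal + (P (closure (ι '' (Set.univ \ S)))).toReal := by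
      rw [← hunion]
      calc (P (closure (ι '' S) ∪ closure (ι '' (Set.univ \ S)))).toReal
          ≤ (P (closure (ι '' S)) + P (closure (ι '' (Set.univ \ S)))).toReal :=
            ENNReal.toReal_mono
              (ENNReal.add_ne_top.2 ⟨measure_ne_top P _, measure_ne_top P _⟩)
              (measure_union_le _ _)
        _ = _ := ENNReal.toReal_add (measure_ne_top P _) (measure_ne_top P _)
    linarith
  constructor
  · rw [hY]
    have : πs S + πs (Set.univ \ S) = 1 := by linarith
    exact this
  · linarith
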